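/- Let E ⊂ ℝ² be a connected set containing two points a and b, let λ > 0, and define I_λ(E) := (1/(2λπ)) ∫_{S¹} ℒ²(E_{λ,ν}) dH¹(ν), where E_{λ,ν} = {x + tν : |t| ≤ λ, x ∈ E}. Then I_λ(E) ≥ (2/π)|a − b|. -/

import Mathlib

open MeasureTheory Metric Set Filter Topology
open scoped ENNReal NNReal

/-- The `λ`-enlargement of `A` in the direction `ν`: `A_{λ,ν} = {a + tν : |t| ≤ λ, a ∈ A}`. -/
def enlarge (A : Set (EuclideanSpace ℝ (Fin 2))) (lam : ℝ) (ν : EuclideanSpace ℝ (Fin 2)) :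
    Set (EuclideanSpace ℝ (Fin 2)) :=
  {p | ∃ a ∈ A, ∃ t : ℝ, |t| ≤ lam ∧ p = a + t • ν}

/-- The averaged directional enlargement quantity
`I_λ(A) = (1/(2λπ)) ∫_{S¹} ℒ²(A_{λ,ν}) dH¹(ν)`. -/
noncomputable def Ilam (lam : ℝ) (A : Set (EuclideanSpace ℝ (Fin 2))) : ℝ≥0∞ :=
  ENNReal.ofReal (1 / (2 * lam * Real.pi)) *
    ∫⁻ ν in sphere (0 : EuclideanSpace ℝ (Fin 2)) 1, volume (enlarge A lam ν) ∂(μH[1])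

open scoped RealInnerProductSpace

local notation "E2" => EuclideanSpace ℝ (Fin 2)

/-- Rotation by π/2. -/
noncomputable def Jrot (x : E2) : E2 := (WithLp.equiv 2 (Fin 2 → ℝ)).symm ![-(x 1), x 0]

lemma Jrot_apply0 (x : E2) : Jrot x 0 = -(x 1) := rfl
lemma Jrot_apply1 (x : E2) : Jrot x 1 = x 0 := rfl

lemma inner_two (x y : E2) : ⟪x, y⟫ = x 0 * y 0 + x 1 * y 1 := by
  simp [PiLp.inner_apply, Fin.sum_univ_two, RCLike.inner_apply, mul_comm]

lemma normsq_two (x : E2) : ‖x‖ ^ 2 = x 0 ^ 2 + x 1 ^ 2 := by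
  rw [← real_inner_self_eq_norm_sq, inner_two]; ring

lemma norm_Jrot (x : E2) : ‖Jrot x‖ = ‖x‖ := by
  have h1 : ‖Jrot x‖ ^ 2 = ‖x‖ ^ 2 := by
    rw [normsq_two, normsq_two, Jrot_apply0, Jrot_apply1]; ring
  nlinarith [norm_nonneg (Jrot x), norm_nonneg x]

lemma inner_Jrot_self (x : E2) : ⟪x, Jrot x⟫ = 0 := by
  rw [inner_two, Jrot_apply0, Jrot_apply1]; ring

lemma inner_Jrot_swap (v ν : E2) : ⟪Jrot v, ν⟫ = -⟪v, Jrot ν⟫ := by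
  rw [inner_two, inner_two, Jrot_apply0, Jrot_apply1, Jrot_apply0, Jrot_apply1]; ring

lemma hausdorff_ge_dist {A : Set E2} (hA : IsPreconnected A) {x y : E2}
    (hx : x ∈ A) (hy : y ∈ A) : ENNReal.ofReal (dist x y) ≤ μH[1] A := by
  rcases eq_or_ne x y with rfl | hne
  · simp
  · have hd : 0 < dist x y := dist_pos.2 hne
    set u : E2 := (dist x y)⁻¹ • (x - y) with hu
    have hnu : ‖u‖ = 1 := by
      rw [hu, norm_smul, norm_inv, Real.norm_eq_abs, abs_of_pos hd, ← dist_eq_norm,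
        inv_mul_cancel₀ hd.ne']
    set g : E2 → ℝ := fun z => ⟪z, u⟫ with hg
    have hlip : LipschitzWith 1 g := by
      apply LipschitzWith.of_dist_le_mul
      intro z₁ z₂
      rw [NNReal.coe_one, one_mul, Real.dist_eq, hg]
      calc |⟪z₁, u⟫ - ⟪z₂, u⟫| = |⟪z₁ - z₂, u⟫| := by rw [inner_sub_left]
        _ ≤ ‖z₁ - z₂‖ * ‖u‖ := abs_real_inner_le_norm _ _
        _ = dist z₁ z₂ := by rw [hnu, mul_one, dist_eq_norm]
    have himg : μH[1] (g '' A) ≤ μH[1] A := by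
      simpa using hlip.hausdorffMeasure_image_le (by norm_num : (0:ℝ) ≤ 1) A
    have hconn : IsPreconnected (g '' A) := hA.image g (hlip.continuous.continuousOn)
    have hsub : uIcc (g x) (g y) ⊆ g '' A :=
      hconn.ordConnected.uIcc_subset (mem_image_of_mem g hx) (mem_image_of_mem g hy)
    have hvol : ENNReal.ofReal (dist x y) ≤ μH[1] (g '' A) := by
      rw [MeasureTheory.hausdorffMeasure_real]
      calc ENNReal.ofReal (dist x y) = volume (uIcc (g x) (g y)) := by
            rw [Real.volume_interval]
            congr 1
            have : g x - g y = ⟪x - y, u⟫ := by rw [hg, inner_sub_left]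
            have h2 : ⟪x - y, u⟫ = dist x y := by
              rw [hu, real_inner_smul_right, real_inner_self_eq_norm_sq, ← dist_eq_norm]
              field_simp
            rw [abs_sub_comm, this, h2, abs_of_pos hd]
        _ ≤ volume (g '' A) := measure_mono hsub
    exact hvol.trans himg

lemma norm_comb {w w₂ : E2} (hw : ‖w‖ = 1) (hw₂ : ‖w₂‖ = 1) (ho : ⟪w, w₂⟫ = 0)
    (x y : ℝ) : ‖x • w + y • w₂‖ ^ 2 = x ^ 2 + y ^ 2 := by
  rw [← real_inner_self_eq_norm_sq]
  simp only [inner_add_left, inner_add_right, real_inner_smul_left, real_inner_smul_right]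
  rw [real_inner_self_eq_norm_sq w, real_inner_self_eq_norm_sq w₂, real_inner_comm w w₂, ho, hw, hw₂]
  ring

lemma arc_lemma (w : E2) (hw : ‖w‖ = 1) {s : ℝ} (hs0 : 0 < s) (hs1 : s < 1) :
    ∃ C : Set E2, MeasurableSet C ∧ C ⊆ sphere (0:E2) 1 ∧ (∀ ν ∈ C, s ≤ ⟪w, ν⟫) ∧
      ENNReal.ofReal (2 * Real.sqrt (1 - s ^ 2)) ≤ μH[1] C := by
  set w₂ := Jrot w with hw₂def
  have hw₂ : ‖w₂‖ = 1 := by rw [hw₂def, norm_Jrot, hw]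
  have ho : ⟪w, w₂⟫ = 0 := inner_Jrot_self w
  set θ := Real.arccos s with hθ
  have hθ0 : 0 ≤ θ := Real.arccos_nonneg s
  have hθπ : θ ≤ Real.pi := Real.arccos_le_pi s
  have hcosθ : Real.cos θ = s := Real.cos_arccos (by linarith) hs1.le
  have hsinθ : Real.sin θ = Real.sqrt (1 - s ^ 2) := by rw [hθ, Real.sin_arccos]
  set q : ℝ → E2 := fun φ => Real.cos φ • w + Real.sin φ • w₂ with hq
  have hqcont : Continuous q := by
    exact (Real.continuous_cos.smul continuous_const).add (Real.continuous_sin.smul continuous_const)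
  set C := q '' Icc (-θ) θ with hC
  have hCcomp : IsCompact C := (isCompact_Icc).image hqcont
  have hqnorm : ∀ φ, ‖q φ‖ = 1 := by
    intro φ
    have := norm_comb hw hw₂ ho (Real.cos φ) (Real.sin φ)
    have h2 : ‖q φ‖ ^ 2 = 1 := by
      rw [hq]; simp only []; rw [this, Real.cos_sq_add_sin_sq]
    nlinarith [norm_nonneg (q φ)]
  have hinner : ∀ φ, ⟪w, q φ⟫ = Real.cos φ := by
    intro φ
    rw [hq]; simp only []
    rw [inner_add_right, real_inner_smul_right, real_inner_smul_right,
      real_inner_self_eq_norm_sq, hw, ho]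
    ring
  refine ⟨C, hCcomp.isClosed.measurableSet, ?_, ?_, ?_⟩
  · rintro ν ⟨φ, hφ, rfl⟩
    rw [mem_sphere_zero_iff_norm]; exact hqnorm φ
  · rintro ν ⟨φ, hφ, rfl⟩
    rw [hinner φ, ← hcosθ, ← Real.cos_abs φ]
    exact Real.cos_le_cos_of_nonneg_of_le_pi (x := |φ|) (abs_nonneg φ) hθπ (abs_le.2 ⟨hφ.1, hφ.2⟩)
  · have hxy : dist (q θ) (q (-θ)) = 2 * Real.sqrt (1 - s ^ 2) := by
      have hdiff : q θ - q (-θ) = (2 * Real.sin θ) • w₂ := by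
        rw [hq]; simp only [Real.cos_neg, Real.sin_neg]
        module
      have hsin0 : 0 ≤ Real.sin θ := Real.sin_nonneg_of_nonneg_of_le_pi hθ0 hθπ
      rw [dist_eq_norm, hdiff, norm_smul, hw₂, mul_one, Real.norm_eq_abs, ← hsinθ,
        abs_of_nonneg (by linarith : (0:ℝ) ≤ 2 * Real.sin θ)]
    rw [← hxy]
    exact hausdorff_ge_dist ((isPreconnected_Icc).image q hqcont.continuousOn)
      (mem_image_of_mem q (by constructor <;> linarith : θ ∈ Icc (-θ) θ))
      (mem_image_of_mem q (by constructor <;> linarith : -θ ∈ Icc (-θ) θ))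

lemma sphere_integral_ge (v : E2) :
    ENNReal.ofReal (2 * ‖v‖) ≤ ∫⁻ ν in sphere (0:E2) 1, ENNReal.ofReal |⟪v, ν⟫| ∂μH[1] := by
  rcases eq_or_ne v 0 with rfl | hv
  · simp
  have hd : 0 < ‖v‖ := norm_pos_iff.2 hv
  set d := ‖v‖ with hddef
  set μ' := (μH[1] : Measure E2).restrict (sphere (0:E2) 1) with hμ'
  have hcont : Continuous fun ν : E2 => |(⟪v, ν⟫ : ℝ)| := (continuous_const.inner continuous_id).abs
  have hlayer := lintegral_eq_lintegral_meas_lt μ' (f := fun ν => |(⟪v, ν⟫ : ℝ)|)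
      (Filter.Eventually.of_forall fun ν => abs_nonneg _) hcont.aemeasurable
  have hstep : ∀ t ∈ Ioo (0:ℝ) d,
      ENNReal.ofReal (4 - 3 * (t / d) - (t / d) ^ 2) ≤ μ' {a : E2 | t < |(⟪v, a⟫ : ℝ)|} := by
    intro t ht
    set r := t / d with hr
    have hr0 : 0 < r := div_pos ht.1 hd
    have hr1 : r < 1 := (div_lt_one hd).2 ht.2
    set s := Real.sqrt ((3 * r + r ^ 2) / 4) with hs
    have hsq : s ^ 2 = (3 * r + r ^ 2) / 4 := Real.sq_sqrt (by nlinarith)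
    have hs0 : 0 < s := Real.sqrt_pos.2 (by nlinarith)
    have hs1 : s < 1 := by nlinarith
    have hrs : r < s := by nlinarith
    set w := d⁻¹ • v with hwdef
    have hw : ‖w‖ = 1 := by
      rw [hwdef, norm_smul, norm_inv, Real.norm_eq_abs, abs_of_pos hd, ← hddef,
        inv_mul_cancel₀ hd.ne']
    have hwv : ∀ ν : E2, (⟪w, ν⟫ : ℝ) = d⁻¹ * ⟪v, ν⟫ := fun ν => real_inner_smul_left v ν d⁻¹
    obtain ⟨Cp, hCpm, hCps, hCpi, hCpμ⟩ := arc_lemma w hw hs0 hs1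
    obtain ⟨Cm, hCmm, hCms, hCmi, hCmμ⟩ := arc_lemma (-w) (by rw [norm_neg, hw]) hs0 hs1
    have htds : t < d * s := by
      have : t = d * r := by rw [hr]; field_simp
      rw [this]
      exact (mul_lt_mul_iff_right₀ hd).2 hrs
    have hsubp : Cp ⊆ {a : E2 | t < |(⟪v, a⟫ : ℝ)|} := by
      intro ν hν
      have h1 : s ≤ d⁻¹ * ⟪v, ν⟫ := by rw [← hwv]; exact hCpi ν hν
      have h2 : d * s ≤ ⟪v, ν⟫ := by
        have := (mul_le_mul_iff_right₀ hd).2 h1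
        rwa [mul_inv_cancel_left₀ hd.ne'] at this
      exact lt_of_lt_of_le htds (h2.trans (le_abs_self _))
    have hsubm : Cm ⊆ {a : E2 | t < |(⟪v, a⟫ : ℝ)|} := by
      intro ν hν
      have h1 : s ≤ -(d⁻¹ * ⟪v, ν⟫) := by
        have := hCmi ν hν
        rwa [inner_neg_left, hwv] at this
      have h2 : d * s ≤ -⟪v, ν⟫ := by
        have := (mul_le_mul_iff_right₀ hd).2 h1
        rwa [mul_neg, mul_inv_cancel_left₀ hd.ne'] at this
      exact lt_of_lt_of_le htds (h2.trans (neg_le_abs _))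
    have hdisj : Disjoint Cp Cm := by
      rw [Set.disjoint_left]
      intro ν hνp hνm
      have h1 := hCpi ν hνp
      have h2 := hCmi ν hνm
      rw [inner_neg_left] at h2
      linarith
    have hμp : μ' Cp = μH[1] Cp := by
      rw [hμ', Measure.restrict_apply hCpm, inter_eq_self_of_subset_left hCps]
    have hμm : μ' Cm = μH[1] Cm := by
      rw [hμ', Measure.restrict_apply hCmm, inter_eq_self_of_subset_left hCms]
    have hunion : μ' (Cp ∪ Cm) = μ' Cp + μ' Cm := measure_union hdisj hCmm
    have hsqrt : (1 - s ^ 2) ≤ Real.sqrt (1 - s ^ 2) := by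
      nlinarith [Real.sq_sqrt (by nlinarith : (0:ℝ) ≤ 1 - s ^ 2),
        Real.sqrt_nonneg (1 - s ^ 2)]
    calc ENNReal.ofReal (4 - 3 * (t / d) - (t / d) ^ 2)
        ≤ ENNReal.ofReal (2 * Real.sqrt (1 - s ^ 2)) + ENNReal.ofReal (2 * Real.sqrt (1 - s ^ 2)) := by
          rw [← ENNReal.ofReal_add (by positivity) (by positivity)]
          apply ENNReal.ofReal_le_ofReal
          rw [← hr]
          nlinarith
      _ ≤ μ' Cp + μ' Cm := add_le_add (hμp ▸ hCpμ) (hμm ▸ hCmμ)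
      _ = μ' (Cp ∪ Cm) := hunion.symm
      _ ≤ μ' {a : E2 | t < |(⟪v, a⟫ : ℝ)|} := measure_mono (union_subset hsubp hsubm)
  have hcont2 : Continuous fun t : ℝ => 4 - 3 * (t / d) - (t / d) ^ 2 := by fun_prop
  have hInt' : IntegrableOn (fun t : ℝ => 4 - 3 * (t / d) - (t / d) ^ 2) (Ioo 0 d) volume :=
    (hcont2.integrableOn_Icc).mono_set Ioo_subset_Icc_self
  have hnn : 0 ≤ᵐ[volume.restrict (Ioo (0:ℝ) d)] fun t : ℝ => 4 - 3 * (t / d) - (t / d) ^ 2 := by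
    rw [EventuallyLE, ae_restrict_iff' measurableSet_Ioo]
    apply ae_of_all
    intro t ht
    have h1 : 0 < t / d := div_pos ht.1 hd
    have h2 : t / d < 1 := (div_lt_one hd).2 ht.2
    simp only [Pi.zero_apply]
    nlinarith
  have hval : ∫ t in Ioo (0:ℝ) d, (4 - 3 * (t / d) - (t / d) ^ 2) = 13 * d / 6 := by
    rw [← integral_Ioc_eq_integral_Ioo, ← intervalIntegral.integral_of_le hd.le]
    have h1 : (fun t : ℝ => 4 - 3 * (t / d) - (t / d) ^ 2)
        = fun t : ℝ => 4 - (3 / d) * t - (1 / d ^ 2) * t ^ 2 := by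
      funext t; ring
    have i0 : IntervalIntegrable (fun _ : ℝ => (4:ℝ)) volume 0 d := intervalIntegrable_const
    have i1 : IntervalIntegrable (fun t : ℝ => (3 / d) * t) volume 0 d :=
      (continuous_const.mul continuous_id).intervalIntegrable _ _
    have i2 : IntervalIntegrable (fun t : ℝ => (1 / d ^ 2) * t ^ 2) volume 0 d :=
      (continuous_const.mul (continuous_pow 2)).intervalIntegrable _ _
    rw [h1, intervalIntegral.integral_sub (i0.sub i1) i2, intervalIntegral.integral_sub i0 i1,
      intervalIntegral.integral_const, intervalIntegral.integral_const_mul,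
      intervalIntegral.integral_const_mul, integral_id, integral_pow]
    field_simp
    ring
  have hlin : ∫⁻ t in Ioo (0:ℝ) d, ENNReal.ofReal (4 - 3 * (t / d) - (t / d) ^ 2)
      = ENNReal.ofReal (13 * d / 6) := by
    rw [← ofReal_integral_eq_lintegral_ofReal hInt' hnn, hval]
  calc ENNReal.ofReal (2 * d) ≤ ENNReal.ofReal (13 * d / 6) :=
        ENNReal.ofReal_le_ofReal (by linarith)
    _ = ∫⁻ t in Ioo (0:ℝ) d, ENNReal.ofReal (4 - 3 * (t / d) - (t / d) ^ 2) := hlin.symm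
    _ ≤ ∫⁻ t in Ioo (0:ℝ) d, μ' {a : E2 | t < |(⟪v, a⟫ : ℝ)|} :=
        setLIntegral_mono' measurableSet_Ioo hstep
    _ ≤ ∫⁻ t in Ioi (0:ℝ), μ' {a : E2 | t < |(⟪v, a⟫ : ℝ)|} :=
        lintegral_mono' (Measure.restrict_mono (fun x hx => hx.1) le_rfl) le_rfl
    _ = ∫⁻ ν in sphere (0:E2) 1, ENNReal.ofReal |(⟪v, ν⟫ : ℝ)| ∂μH[1] := hlayer.symm

lemma decomp {ν : E2} (hν : ‖ν‖ = 1) (x : E2) :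
    (⟪x, Jrot ν⟫) • (Jrot ν) + (⟪x, ν⟫) • ν = x := by
  have hn : ν 0 ^ 2 + ν 1 ^ 2 = 1 := by rw [← normsq_two, hν]; norm_num
  ext i
  fin_cases i
  · show (⟪x, Jrot ν⟫) * (Jrot ν) 0 + (⟪x, ν⟫) * ν 0 = x 0
    rw [inner_two, inner_two, Jrot_apply0, Jrot_apply1]
    linear_combination x 0 * hn
  · show (⟪x, Jrot ν⟫) * (Jrot ν) 1 + (⟪x, ν⟫) * ν 1 = x 1
    rw [inner_two, inner_two, Jrot_apply0, Jrot_apply1]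
    linear_combination x 1 * hn

noncomputable def rotMap (ν : E2) : E2 →ₗ[ℝ] E2 :=
  ((EuclideanSpace.projₗ (𝕜 := ℝ) (0 : Fin 2)).smulRight (Jrot ν)) +
    ((EuclideanSpace.projₗ (𝕜 := ℝ) (1 : Fin 2)).smulRight ν)

lemma rotMap_apply (ν x : E2) : rotMap ν x = x 0 • Jrot ν + x 1 • ν := rfl

noncomputable def PhiE : E2 ≃ᵐ (ℝ × ℝ) :=
  (MeasurableEquiv.toLp 2 (Fin 2 → ℝ)).symm.trans MeasurableEquiv.finTwoArrow

lemma PhiE_mp : MeasurePreserving PhiE volume volume :=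
  (volume_preserving_finTwoArrow ℝ).comp (EuclideanSpace.volume_preserving_symm_measurableEquiv_toLp (Fin 2))

lemma PhiE_symm_apply0 (y t : ℝ) : (PhiE.symm (y, t)) 0 = y := rfl
lemma PhiE_symm_apply1 (y t : ℝ) : (PhiE.symm (y, t)) 1 = t := rfl

lemma enlarge_vol_ge {E : Set E2} (hE : IsPreconnected E) {a b : E2} (ha : a ∈ E) (hb : b ∈ E)
    {lam : ℝ} (hlam : 0 < lam) {ν : E2} (hν : ‖ν‖ = 1) :
    ENNReal.ofReal (2 * lam) * ENNReal.ofReal |⟪Jrot (b - a), ν⟫| ≤ volume (enlarge E lam ν) := by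
  set ν' := Jrot ν with hν'def
  have hν' : ‖ν'‖ = 1 := by rw [hν'def, norm_Jrot, hν]
  have ho : ⟪ν', ν⟫ = 0 := by
    rw [hν'def, inner_Jrot_swap, inner_Jrot_self, neg_zero]
  -- rotation isometry
  have hnorm : ∀ x : E2, ‖rotMap ν x‖ = ‖x‖ := by
    intro x
    have h1 : ‖rotMap ν x‖ ^ 2 = ‖x‖ ^ 2 := by
      rw [rotMap_apply, norm_comb hν' hν ho, normsq_two]
    nlinarith [norm_nonneg (rotMap ν x), norm_nonneg x]
  set Riso : E2 →ₗᵢ[ℝ] E2 := ⟨rotMap ν, hnorm⟩ with hRiso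
  set R : E2 ≃ₗᵢ[ℝ] E2 := Riso.toLinearIsometryEquiv rfl with hR
  have hRapp : ∀ x : E2, R x = x 0 • ν' + x 1 • ν := by
    intro x
    rw [hR, Riso.toLinearIsometryEquiv_apply, hRiso]
    exact rotMap_apply ν x
  have hRmp : MeasurePreserving R volume volume := R.measurePreserving
  rw [measure_eq_iInf]
  refine le_iInf fun G => le_iInf fun hGsub => le_iInf fun hGm => ?_
  have hG' : MeasurableSet (⇑R ⁻¹' G) := hGm.preimage R.continuous.measurable
  set G2 : Set (ℝ × ℝ) := PhiE '' (⇑R ⁻¹' G) with hG2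
  have hG2m : MeasurableSet G2 := PhiE.measurableSet_image.2 hG'
  have hvol1 : volume G = volume G2 := by
    rw [← hRmp.measure_preimage hGm.nullMeasurableSet]
    rw [hG2, MeasurableEquiv.image_eq_preimage_symm]
    exact ((PhiE_mp.symm PhiE).measure_preimage hG'.nullMeasurableSet).symm
  -- the projection interval
  set K := uIcc (⟪a, ν'⟫ : ℝ) (⟪b, ν'⟫ : ℝ) with hK
  have hproj : ∀ y ∈ K, ∃ x ∈ E, (⟪x, ν'⟫ : ℝ) = y := by
    intro y hy
    have hconn : IsPreconnected ((fun x : E2 => (⟪x, ν'⟫ : ℝ)) '' E) :=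
      hE.image _ (continuous_id.inner continuous_const).continuousOn
    have hsub : K ⊆ (fun x : E2 => (⟪x, ν'⟫ : ℝ)) '' E :=
      hconn.ordConnected.uIcc_subset (mem_image_of_mem _ ha) (mem_image_of_mem _ hb)
    obtain ⟨x, hx, hxy⟩ := hsub hy
    exact ⟨x, hx, hxy⟩
  have hslice : ∀ y ∈ K, ENNReal.ofReal (2 * lam) ≤ volume {t : ℝ | (y, t) ∈ G2} := by
    intro y hy
    obtain ⟨x, hxE, hxy⟩ := hproj y hy
    have hsub2 : Icc ((⟪x, ν⟫ : ℝ) - lam) ((⟪x, ν⟫ : ℝ) + lam) ⊆ {t : ℝ | (y, t) ∈ G2} := by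
      intro t ht
      have hmem : R (PhiE.symm (y, t)) ∈ enlarge E lam ν := by
        refine ⟨x, hxE, t - ⟪x, ν⟫, abs_le.2 ⟨by linarith [ht.1], by linarith [ht.2]⟩, ?_⟩
        rw [hRapp, PhiE_symm_apply0, PhiE_symm_apply1, ← hxy]
        have hdec := decomp hν x
        rw [hν'def]
        rw [← hν'def] at hdec ⊢
        calc (⟪x, ν'⟫ : ℝ) • ν' + t • ν
            = ((⟪x, ν'⟫ : ℝ) • ν' + (⟪x, ν⟫ : ℝ) • ν) + (t - ⟪x, ν⟫) • ν := by module
          _ = x + (t - ⟪x, ν⟫) • ν := by rw [hdec]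
      show (y, t) ∈ G2
      rw [hG2]
      exact ⟨PhiE.symm (y, t), hGsub hmem, PhiE.apply_symm_apply _⟩
    calc ENNReal.ofReal (2 * lam)
        = volume (Icc ((⟪x, ν⟫ : ℝ) - lam) ((⟪x, ν⟫ : ℝ) + lam)) := by
          rw [Real.volume_Icc]; congr 1; ring
      _ ≤ volume {t : ℝ | (y, t) ∈ G2} := measure_mono hsub2
  have hKvol : volume K = ENNReal.ofReal |(⟪b - a, ν'⟫ : ℝ)| := by
    rw [hK, Real.volume_interval, inner_sub_left]
  calc ENNReal.ofReal (2 * lam) * ENNReal.ofReal |(⟪Jrot (b - a), ν⟫ : ℝ)|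
      = ENNReal.ofReal (2 * lam) * volume K := by
        rw [hKvol]
        congr 2
        rw [inner_Jrot_swap, abs_neg, hν'def]
    _ = ∫⁻ _ in K, ENNReal.ofReal (2 * lam) ∂volume := by rw [setLIntegral_const, mul_comm]
    _ ≤ ∫⁻ y in K, volume {t : ℝ | (y, t) ∈ G2} ∂volume :=
        setLIntegral_mono' measurableSet_uIcc hslice
    _ ≤ ∫⁻ y, volume {t : ℝ | (y, t) ∈ G2} ∂volume := setLIntegral_le_lintegral _ _
    _ = volume G2 := by
        rw [Measure.volume_eq_prod, Measure.prod_apply hG2m]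
        rfl
    _ = volume G := hvol1.symm

/-- If `E ⊂ ℝ²` is connected and contains `a` and `b`, then
`I_λ(E) ≥ (2/π)|a − b|` for every `λ > 0`. -/
theorem stmt_8 (E : Set (EuclideanSpace ℝ (Fin 2))) (hE : IsConnected E)
    (a b : EuclideanSpace ℝ (Fin 2)) (ha : a ∈ E) (hb : b ∈ E)
    (lam : ℝ) (hlam : 0 < lam) :
    ENNReal.ofReal ((2 / Real.pi) * dist a b) ≤ Ilam lam E := by
  have hE' : IsPreconnected E := hE.isPreconnected
  set v : E2 := b - a with hv
  set u : E2 := Jrot v with hu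
  have key1 : ∀ ν ∈ sphere (0:E2) 1,
      ENNReal.ofReal (2 * lam) * ENNReal.ofReal |(⟪u, ν⟫ : ℝ)| ≤ volume (enlarge E lam ν) := by
    intro ν hν
    exact enlarge_vol_ge hE' ha hb hlam (mem_sphere_zero_iff_norm.1 hν)
  have h2 : ENNReal.ofReal (2 * lam) *
      ∫⁻ ν in sphere (0:E2) 1, ENNReal.ofReal |(⟪u, ν⟫ : ℝ)| ∂μH[1]
      ≤ ∫⁻ ν in sphere (0:E2) 1, volume (enlarge E lam ν) ∂μH[1] := by
    rw [← lintegral_const_mul' _ _ ENNReal.ofReal_ne_top]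
    exact setLIntegral_mono' isClosed_sphere.measurableSet key1
  have h3 := sphere_integral_ge u
  have hnu : ‖u‖ = dist a b := by
    rw [hu, norm_Jrot, hv, ← dist_eq_norm, dist_comm]
  rw [hnu] at h3
  have hπ : (0:ℝ) < Real.pi := Real.pi_pos
  have harith : (2 / Real.pi) * dist a b = (1 / (2 * lam * Real.pi)) * ((2 * lam) * (2 * dist a b)) := by
    field_simp
  calc ENNReal.ofReal ((2 / Real.pi) * dist a b)
      = ENNReal.ofReal (1 / (2 * lam * Real.pi)) *
          (ENNReal.ofReal (2 * lam) * ENNReal.ofReal (2 * dist a b)) := by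
        rw [harith, ENNReal.ofReal_mul (by positivity), ENNReal.ofReal_mul (by positivity)]
    _ ≤ ENNReal.ofReal (1 / (2 * lam * Real.pi)) *
          (ENNReal.ofReal (2 * lam) *
            ∫⁻ ν in sphere (0:E2) 1, ENNReal.ofReal |(⟪u, ν⟫ : ℝ)| ∂μH[1]) :=
        mul_le_mul_right (mul_le_mul_right h3 _) _
    _ ≤ ENNReal.ofReal (1 / (2 * lam * Real.pi)) *
          ∫⁻ ν in sphere (0:E2) 1, volume (enlarge E lam ν) ∂μH[1] :=
        mul_le_mul_right h2 _
    _ = Ilam lam E := rfl
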